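/- Let X be a normal Tychonoff space such that X = X₁ ∪ ⋯ ∪ Xₙ, where each Xᵢ is a closed subspace of X which is connected modulo realcompactness (i.e., connected modulo the ideal 𝓡_{Xᵢ} in Xᵢ generated by the subsets of Xᵢ with realcompact closure in Xᵢ). If X₁ ∩ ⋯ ∩ Xₙ is not realcompact, then X is connected modulo realcompactness (connected modulo 𝓡_X). -/

import Mathlib

open Set Topology

/-- An ideal in a set `X`: a nonempty collection of subsets of `X`, downward closed
and closed under finite unions. -/
def IsSetIdeal {X : Type*} (H : Set (Set X)) : Prop :=
  H.Nonempty ∧ (∀ A B : Set X, A ⊆ B → B ∈ H → A ∈ H) ∧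
    (∀ A B : Set X, A ∈ H → B ∈ H → A ∪ B ∈ H)

/-- A continuous map `f : X → [0,1]` is 2-valued modulo an ideal `H` if `f⁻¹(0) ∉ H`,
`f⁻¹(1) ∉ H`, and `X \ (f⁻¹(0) ∪ f⁻¹(1)) ∈ H`. -/
def TwoValuedMod {X : Type*} [TopologicalSpace X] (H : Set (Set X)) (f : X → ℝ) : Prop :=
  Continuous f ∧ (∀ x, f x ∈ Set.Icc (0 : ℝ) 1) ∧
    f ⁻¹' {0} ∉ H ∧ f ⁻¹' {1} ∉ H ∧ (f ⁻¹' {0} ∪ f ⁻¹' {1})ᶜ ∈ H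

/-- `X` is connected modulo the ideal `H` if there is no continuous `f : X → [0,1]`
that is 2-valued modulo `H`. -/
def ConnectedMod (X : Type*) [TopologicalSpace X] (H : Set (Set X)) : Prop :=
  ¬ ∃ f : X → ℝ, TwoValuedMod H f

/-- The ideal generated by a collection `𝓐` of subsets of `X`: all subsets of finite
unions of members of `𝓐`. -/
def GenIdeal {X : Type*} (𝓐 : Set (Set X)) : Set (Set X) :=
  {S | ∃ 𝓑 : Set (Set X), 𝓑 ⊆ 𝓐 ∧ 𝓑.Finite ∧ S ⊆ ⋃₀ 𝓑}

/-- A topological space `Y` is realcompact if it admits a closed embedding into a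
product `ℝ^ι` for some index set `ι`. -/
def IsRealcompact (Y : Type u) [TopologicalSpace Y] : Prop :=
  ∃ (ι : Type u) (f : Y → ι → ℝ), IsClosedEmbedding f

section AuxRealcompact
open Filter

/-! ### Auxiliary lemmas -/

section Aux

lemma rc_mono {Y Z : Type u} [TopologicalSpace Y] [TopologicalSpace Z] {e : Y → Z}
    (he : IsClosedEmbedding e) (hZ : IsRealcompact Z) : IsRealcompact Y := by
  obtain ⟨ι, f, hf⟩ := hZ
  exact ⟨ι, f ∘ e, hf.comp he⟩

lemma rc_empty {Z : Type u} [TopologicalSpace Z] [IsEmpty Z] : IsRealcompact Z := by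
  have hc : Continuous (fun z : Z => (isEmptyElim z : Z → ℝ)) :=
    continuous_def.2 fun s _ => by
      rw [Set.eq_empty_of_isEmpty ((fun z : Z => (isEmptyElim z : Z → ℝ)) ⁻¹' s)]
      exact isOpen_empty
  refine ⟨Z, fun z => isEmptyElim z,
    IsClosedEmbedding.of_continuous_injective_isClosedMap hc
      (fun a _ _ => isEmptyElim a) (fun s _ => ?_)⟩
  rw [Set.eq_empty_of_isEmpty s, Set.image_empty]
  exact isClosed_empty

/-- transfer realcompactness along closed embeddings with nested ranges -/
lemma rc_transfer {X Y Z : Type u} [TopologicalSpace X] [TopologicalSpace Y] [TopologicalSpace Z]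
    {e₁ : Y → X} {e₂ : Z → X} (he₁ : IsClosedEmbedding e₁) (he₂ : IsClosedEmbedding e₂)
    (hsub : range e₁ ⊆ range e₂) (hZ : IsRealcompact Z) : IsRealcompact Y := by
  have hmem : ∀ y : Y, e₁ y ∈ range e₂ := fun y => hsub (mem_range_self y)
  choose m hm using hmem
  have hcomp : e₂ ∘ m = e₁ := funext hm
  have hmc : Continuous m := by
    rw [he₂.isInducing.continuous_iff, hcomp]; exact he₁.continuous
  have hmind : IsInducing m :=
    IsInducing.of_comp hmc he₂.continuous (by rw [hcomp]; exact he₁.isInducing)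
  have hinj : Function.Injective m := fun a b h =>
    he₁.injective (by rw [← hm a, ← hm b, h])
  have hrange : range m = e₂ ⁻¹' (range e₁) := by
    ext z
    constructor
    · rintro ⟨y, rfl⟩; exact ⟨y, (hm y).symm⟩
    · rintro ⟨y, hy⟩
      exact ⟨y, he₂.injective (by rw [hm y, hy])⟩
  have hcl : IsClosed (range m) := by
    rw [hrange]; exact he₁.isClosed_range.preimage he₂.continuous
  exact rc_mono ⟨⟨hmind, hinj⟩, hcl⟩ hZ

/-- pair of a closed embedding and a continuous map into a T2 space is a closed embedding -/
lemma pair_ce {Z P Q : Type*} [TopologicalSpace Z] [TopologicalSpace P] [TopologicalSpace Q]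
    [T2Space Q] {f : Z → P} {h : Z → Q} (hf : IsClosedEmbedding f) (hh : Continuous h) :
    IsClosedEmbedding (fun z => (f z, h z)) := by
  have hc : Continuous fun z => (f z, h z) := hf.continuous.prodMk hh
  refine ⟨⟨IsInducing.of_comp hc continuous_fst hf.isInducing, fun a b hab =>
    hf.injective (congrArg Prod.fst hab)⟩, ?_⟩
  have hsub : closure (range fun z => (f z, h z)) ⊆ range fun z => (f z, h z) := by
    intro p hp
    have hcom : NeBot (comap (fun z => (f z, h z)) (𝓝 p)) := by
      refine Filter.comap_neBot_iff.2 fun U hU => ?_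
      obtain ⟨q, hqU, z, hz⟩ := mem_closure_iff_nhds.1 hp U hU
      exact ⟨z, show (fun z => (f z, h z)) z ∈ U from hz ▸ hqU⟩
    have hsplit : comap (fun z => (f z, h z)) (𝓝 p) = comap f (𝓝 p.1) ⊓ comap h (𝓝 p.2) := by
      rw [nhds_prod_eq, Filter.comap_prod]; rfl
    rw [hsplit] at hcom
    have h1 : NeBot (comap f (𝓝 p.1)) := hcom.mono inf_le_left
    have hp1 : p.1 ∈ range f := by
      rw [← hf.isClosed_range.closure_eq]
      refine mem_closure_iff_nhds.2 fun U hU => ?_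
      obtain ⟨a, ha⟩ := Filter.comap_neBot_iff.1 h1 U hU
      exact ⟨f a, ha, mem_range_self a⟩
    obtain ⟨z, hz⟩ := hp1
    have hnz : comap f (𝓝 p.1) = 𝓝 z := by
      rw [← hz, ← hf.isInducing.nhds_eq_comap]
    rw [hnz] at hcom
    have hmapped : NeBot (𝓝 (h z) ⊓ 𝓝 p.2) := by
      refine (hcom.map h).mono (le_inf ?_ ?_)
      · exact (Filter.map_mono inf_le_left).trans hh.continuousAt
      · exact (Filter.map_mono inf_le_right).trans Filter.map_comap_le
    exact ⟨z, Prod.ext hz (eq_of_nhds_neBot hmapped)⟩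
  exact isClosed_of_closure_subset hsub

/-- homeomorphism between a product of function spaces and a function space on a sum -/
def sumElimHomeo (ι J W : Type*) [TopologicalSpace W] :
    ((ι → W) × (J → W)) ≃ₜ ((ι ⊕ J) → W) where
  toFun p := Sum.elim p.1 p.2
  invFun v := (fun i => v (.inl i), fun j => v (.inr j))
  left_inv p := rfl
  right_inv v := funext fun j => by cases j <;> rfl
  continuous_toFun := continuous_pi fun j => by
    cases j with
    | inl i => exact (continuous_apply i).comp continuous_fst
    | inr j => exact (continuous_apply j).comp continuous_snd
  continuous_invFun :=
    (continuous_pi fun i => continuous_apply _).prodMk (continuous_pi fun j => continuous_apply _)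

lemma sumElim_ce {Z ι J : Type*} [TopologicalSpace Z] {f : Z → ι → ℝ} {h : Z → J → ℝ}
    (hf : IsClosedEmbedding f) (hh : Continuous h) :
    IsClosedEmbedding (fun z => Sum.elim (f z) (h z)) := by
  have : (fun z => Sum.elim (f z) (h z)) = (sumElimHomeo ι J ℝ) ∘ (fun z => (f z, h z)) := rfl
  rw [this]
  exact (sumElimHomeo ι J ℝ).isClosedEmbedding.comp (pair_ce hf hh)

/-- core union lemma -/
lemma union_rc_core {Y : Type u} [TopologicalSpace Y] [NormalSpace Y] {A B : Set Y}
    (hA : IsClosed A) (hB : IsClosed B) (hcov : A ∪ B = univ)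
    (hsep : ∀ x y : Y, x ≠ y → ∃ φ : C(Y, ℝ), φ x ≠ φ y)
    (rA : IsRealcompact ↥A) (rB : IsRealcompact ↥B) : IsRealcompact Y := by
  obtain ⟨ι, f, hf⟩ := rA
  obtain ⟨κ, g, hg⟩ := rB
  have hext : ∀ i : ι, ∃ F : C(Y, ℝ), F.restrict A =
      ⟨fun a => f a i, (continuous_apply i).comp hf.continuous⟩ :=
    fun i => ContinuousMap.exists_restrict_eq hA _
  choose F hF using hext
  have hext' : ∀ k : κ, ∃ G : C(Y, ℝ), G.restrict B =
      ⟨fun b => g b k, (continuous_apply k).comp hg.continuous⟩ :=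
    fun k => ContinuousMap.exists_restrict_eq hB _
  choose G hG using hext'
  have hFval : ∀ i (a : ↥A), F i (a : Y) = f a i := fun i a => ContinuousMap.congr_fun (hF i) a
  have hGval : ∀ k (b : ↥B), G k (b : Y) = g b k := fun k b => ContinuousMap.congr_fun (hG k) b
  -- the big map
  set E : Y → (ι ⊕ (κ ⊕ C(Y, ℝ))) → ℝ :=
    fun y => Sum.elim (fun i => F i y) (Sum.elim (fun k => G k y) (fun φ => φ y)) with hE
  have hEc : Continuous E := by
    apply continuous_pi
    rintro (i | k | φ)
    · exact (F i).continuous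
    · exact (G k).continuous
    · exact φ.continuous
  have hEinj : Function.Injective E := by
    intro y₁ y₂ hy
    by_contra hne
    obtain ⟨φ, hφ⟩ := hsep y₁ y₂ hne
    exact hφ (congrFun hy (Sum.inr (Sum.inr φ)))
  have hEA : IsClosedEmbedding (fun a : ↥A => E (a : Y)) := by
    have heq : (fun a : ↥A => E (a : Y)) = fun a : ↥A =>
        Sum.elim (f a) (Sum.elim (fun k => G k (a : Y)) (fun φ => φ (a : Y))) := by
      funext a
      funext j
      rcases j with i | j
      · exact hFval i a
      · rfl
    rw [heq]
    refine sumElim_ce hf ?_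
    apply continuous_pi
    rintro (k | φ)
    · exact (G k).continuous.comp continuous_subtype_val
    · exact φ.continuous.comp continuous_subtype_val
  have hEB : IsClosedEmbedding (fun b : ↥B => E (b : Y)) := by
    have heq : (fun b : ↥B => E (b : Y)) = fun b : ↥B =>
        Sum.elim (fun i => F i (b : Y))
          (Sum.elim (g b) (fun φ : C(Y, ℝ) => φ (b : Y))) := by
      funext b
      funext j
      rcases j with i | k | φ
      · rfl
      · exact hGval k b
      · rfl
    rw [heq]
    -- here the closed embedding part is the *middle* factor; re-associate via homeomorphisms
    -- map into (ι → ℝ) × ((κ ⊕ C(Y,ℝ)) → ℝ) with second component closed embedding: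
    -- use pair_ce with swapped roles and a homeomorphism
    have hpair : IsClosedEmbedding (fun b : ↥B =>
        ((Sum.elim (g b) (fun φ : C(Y, ℝ) => φ (b : Y)), fun i => F i (b : Y)) :
          ((κ ⊕ C(Y, ℝ)) → ℝ) × (ι → ℝ))) := by
      refine pair_ce (sumElim_ce hg ?_) ?_
      · exact continuous_pi fun φ => φ.continuous.comp continuous_subtype_val
      · exact continuous_pi fun i => (F i).continuous.comp continuous_subtype_val
    have : (fun b : ↥B =>
        Sum.elim (fun i => F i (b : Y))
          (Sum.elim (g b) (fun φ : C(Y, ℝ) => φ (b : Y)))) =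
        ((sumElimHomeo ι (κ ⊕ C(Y, ℝ)) ℝ) ∘ (Prod.swap)) ∘ (fun b : ↥B =>
          (Sum.elim (g b) (fun φ : C(Y, ℝ) => φ (b : Y)), fun i => F i (b : Y))) := rfl
    rw [this]
    exact ((sumElimHomeo ι (κ ⊕ C(Y, ℝ)) ℝ).isClosedEmbedding.comp
      (Homeomorph.prodComm _ _).isClosedEmbedding).comp hpair
  have hEclosed : IsClosedMap E := by
    intro C hC
    have hsplitC : E '' C = E '' (C ∩ A) ∪ E '' (C ∩ B) := by
      rw [← Set.image_union, ← Set.inter_union_distrib_left, hcov, Set.inter_univ]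
    rw [hsplitC]
    refine IsClosed.union ?_ ?_
    · have himA : E '' (C ∩ A) = (fun a : ↥A => E (a : Y)) '' (Subtype.val ⁻¹' C) := by
        rw [← Set.image_image E (Subtype.val : ↥A → Y),
          Set.image_preimage_eq_inter_range, Subtype.range_coe]
      rw [himA]
      exact hEA.isClosedMap _ (hC.preimage continuous_subtype_val)
    · have himB : E '' (C ∩ B) = (fun b : ↥B => E (b : Y)) '' (Subtype.val ⁻¹' C) := by
        rw [← Set.image_image E (Subtype.val : ↥B → Y),
          Set.image_preimage_eq_inter_range, Subtype.range_coe]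
      rw [himB]
      exact hEB.isClosedMap _ (hC.preimage continuous_subtype_val)
  exact ⟨_, E, IsClosedEmbedding.of_continuous_injective_isClosedMap hEc hEinj hEclosed⟩

end Aux

section Aux2

variable {X : Type u} [TopologicalSpace X]

/-- continuous functions separate points in a subtype of a T3.5 space -/
lemma sep_subtype [T35Space X] {S : Set X} :
    ∀ x y : ↥S, x ≠ y → ∃ φ : C(↥S, ℝ), φ x ≠ φ y := by
  intro x y hxy
  have hxy' : (x : X) ≠ (y : X) := fun h => hxy (Subtype.ext h)
  obtain ⟨g, hgc, hgx, hgy⟩ := CompletelyRegularSpace.completely_regular (x : X) {(y : X)}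
    isClosed_singleton (by simpa using hxy')
  refine ⟨⟨fun u => (g (u : X) : ℝ),
    (continuous_subtype_val.comp hgc).comp continuous_subtype_val⟩, ?_⟩
  have h2 : g (y : X) = 1 := hgy rfl
  simp only [ContinuousMap.coe_mk, hgx, h2]
  norm_num

/-- the union of two closed realcompact subsets of a normal T3.5 space is realcompact -/
lemma union_pair_rc [NormalSpace X] [T35Space X] {C D : Set X}
    (hC : IsClosed C) (hD : IsClosed D)
    (rC : IsRealcompact ↥C) (rD : IsRealcompact ↥D) : IsRealcompact ↥(C ∪ D) := by
  have hU : IsClosed (C ∪ D) := hC.union hD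
  haveI : NormalSpace ↥(C ∪ D) := hU.isClosedEmbedding_subtypeVal.normalSpace
  set A : Set ↥(C ∪ D) := Subtype.val ⁻¹' C with hA
  set B : Set ↥(C ∪ D) := Subtype.val ⁻¹' D with hB
  have hAcl : IsClosed A := hC.preimage continuous_subtype_val
  have hBcl : IsClosed B := hD.preimage continuous_subtype_val
  have hcov : A ∪ B = univ := by
    ext u
    simp only [hA, hB, Set.mem_union, Set.mem_preimage, Set.mem_univ, iff_true]
    exact u.2
  refine union_rc_core hAcl hBcl hcov sep_subtype ?_ ?_
  · refine rc_transfer (e₁ := (Subtype.val : ↥(C ∪ D) → X) ∘ (Subtype.val : ↥A → ↥(C ∪ D)))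
      (e₂ := (Subtype.val : ↥C → X))
      (hU.isClosedEmbedding_subtypeVal.comp hAcl.isClosedEmbedding_subtypeVal)
      (hC.isClosedEmbedding_subtypeVal) ?_ rC
    rintro _ ⟨a, rfl⟩
    exact ⟨⟨(a : ↥(C ∪ D)) , a.2⟩, rfl⟩
  · refine rc_transfer (e₁ := (Subtype.val : ↥(C ∪ D) → X) ∘ (Subtype.val : ↥B → ↥(C ∪ D)))
      (e₂ := (Subtype.val : ↥D → X))
      (hU.isClosedEmbedding_subtypeVal.comp hBcl.isClosedEmbedding_subtypeVal)
      (hD.isClosedEmbedding_subtypeVal) ?_ rD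
    rintro _ ⟨b, rfl⟩
    exact ⟨⟨(b : ↥(C ∪ D)) , b.2⟩, rfl⟩

/-- finite unions of closed realcompact subsets are realcompact -/
lemma sUnion_rc [NormalSpace X] [T35Space X] {𝓑 : Set (Set X)} (hfin : 𝓑.Finite)
    (h : ∀ R ∈ 𝓑, IsClosed R ∧ IsRealcompact ↥R) : IsRealcompact ↥(⋃₀ 𝓑) := by
  induction 𝓑, hfin using Set.Finite.induction_on with
  | empty =>
    rw [Set.sUnion_empty]
    exact rc_empty
  | insert hnotmem hfin ih =>
    rename_i R 𝓑'
    rw [Set.sUnion_insert]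
    have hcl' : IsClosed (⋃₀ 𝓑') := by
      rw [Set.sUnion_eq_biUnion]
      exact hfin.isClosed_biUnion fun R hR => (h R (Set.mem_insert_of_mem _ hR)).1
    exact union_pair_rc (h R (Set.mem_insert _ _)).1 hcl'
      (h R (Set.mem_insert _ _)).2 (ih fun S hS => h S (Set.mem_insert_of_mem _ hS))

/-! ### GenIdeal lemmas -/

lemma genIdeal_of_subset {𝓐 : Set (Set X)} {S S' : Set X} (h : S ⊆ S')
    (hS' : S' ∈ GenIdeal 𝓐) : S ∈ GenIdeal 𝓐 :=
  let ⟨𝓑, h1, h2, h3⟩ := hS'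
  ⟨𝓑, h1, h2, h.trans h3⟩

lemma genIdeal_union {𝓐 : Set (Set X)} {S S' : Set X} (hS : S ∈ GenIdeal 𝓐)
    (hS' : S' ∈ GenIdeal 𝓐) : S ∪ S' ∈ GenIdeal 𝓐 := by
  obtain ⟨𝓑, h1, h2, h3⟩ := hS
  obtain ⟨𝓑', h1', h2', h3'⟩ := hS'
  exact ⟨𝓑 ∪ 𝓑', Set.union_subset h1 h1', h2.union h2',
    by rw [Set.sUnion_union]; exact Set.union_subset_union h3 h3'⟩

lemma genIdeal_iUnion {𝓐 : Set (Set X)} {ι : Type*} [Finite ι] {S : ι → Set X}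
    (h : ∀ i, S i ∈ GenIdeal 𝓐) : (⋃ i, S i) ∈ GenIdeal 𝓐 := by
  choose 𝓑 h1 h2 h3 using h
  refine ⟨⋃ i, 𝓑 i, Set.iUnion_subset h1, Set.finite_iUnion h2, Set.iUnion_subset fun i => ?_⟩
  exact (h3 i).trans (Set.sUnion_mono (Set.subset_iUnion 𝓑 i))

/-- preimage of a member of the realcompactness ideal under the inclusion of a closed set -/
lemma genIdeal_preimage {S : Set X} (hS : IsClosed S) {W : Set X}
    (hW : W ∈ GenIdeal {R : Set X | IsRealcompact ↥(closure R)}) :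
    (Subtype.val ⁻¹' W : Set ↥S) ∈ GenIdeal {R : Set ↥S | IsRealcompact ↥(closure R)} := by
  obtain ⟨𝓑, hsub, hfin, hWs⟩ := hW
  refine ⟨(fun R => (Subtype.val ⁻¹' R : Set ↥S)) '' 𝓑, ?_, hfin.image _, ?_⟩
  · rintro _ ⟨R, hR, rfl⟩
    refine rc_transfer
      (e₁ := (Subtype.val : ↥S → X) ∘
        (Subtype.val : ↥(closure (Subtype.val ⁻¹' R : Set ↥S)) → ↥S))
      (e₂ := (Subtype.val : ↥(closure R) → X))
      (hS.isClosedEmbedding_subtypeVal.comp isClosed_closure.isClosedEmbedding_subtypeVal)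
      (isClosed_closure.isClosedEmbedding_subtypeVal) ?_ (hsub hR)
    rw [Set.range_comp, Subtype.range_coe, Subtype.range_coe]
    calc (Subtype.val : ↥S → X) '' closure (Subtype.val ⁻¹' R)
        ⊆ closure (Subtype.val '' (Subtype.val ⁻¹' R)) :=
          image_closure_subset_closure_image continuous_subtype_val
      _ ⊆ closure R := closure_mono (Set.image_preimage_subset _ _)
  · intro x hx
    obtain ⟨R, hR, hxR⟩ := hWs hx
    exact ⟨Subtype.val ⁻¹' R, ⟨R, hR, rfl⟩, hxR⟩

/-- image of a member of the realcompactness ideal under the inclusion of a closed set -/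
lemma genIdeal_image {S : Set X} (hS : IsClosed S) {W : Set ↥S}
    (hW : W ∈ GenIdeal {R : Set ↥S | IsRealcompact ↥(closure R)}) :
    (Subtype.val '' W : Set X) ∈ GenIdeal {R : Set X | IsRealcompact ↥(closure R)} := by
  obtain ⟨𝓑, hsub, hfin, hWs⟩ := hW
  refine ⟨(fun R : Set ↥S => (Subtype.val '' R : Set X)) '' 𝓑, ?_, hfin.image _, ?_⟩
  · rintro _ ⟨R, hR, rfl⟩
    refine rc_transfer
      (e₁ := (Subtype.val : ↥(closure ((Subtype.val : ↥S → X) '' R)) → X))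
      (e₂ := (Subtype.val : ↥S → X) ∘ (Subtype.val : ↥(closure R) → ↥S))
      (isClosed_closure.isClosedEmbedding_subtypeVal)
      (hS.isClosedEmbedding_subtypeVal.comp isClosed_closure.isClosedEmbedding_subtypeVal)
      ?_ (hsub hR)
    rw [Subtype.range_coe, Set.range_comp, Subtype.range_coe]
    refine closure_minimal (Set.image_mono subset_closure) ?_
    exact hS.isClosedEmbedding_subtypeVal.isClosedMap _ isClosed_closure
  · rintro _ ⟨w, hw, rfl⟩
    obtain ⟨R, hR, hwR⟩ := hWs hw
    exact ⟨Subtype.val '' R, ⟨R, hR, rfl⟩, ⟨w, hwR, rfl⟩⟩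

end Aux2

end AuxRealcompact

/-- If a normal Tychonoff space `X` is `X₁ ∪ ⋯ ∪ Xₙ` with each `Xᵢ` a closed subspace
connected modulo realcompactness (modulo the ideal in `Xᵢ` generated by the subsets of
`Xᵢ` with realcompact closure), and `X₁ ∩ ⋯ ∩ Xₙ` is not realcompact, then `X` is
connected modulo realcompactness. -/
theorem connectedMod_realcompact_of_finite_union {X : Type u} [TopologicalSpace X]
    [NormalSpace X] [T35Space X]
    (n : ℕ) (hn : 0 < n) (Xs : Fin n → Set X)
    (hcl : ∀ i, IsClosed (Xs i))
    (hcover : ⋃ i, Xs i = Set.univ)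
    (hconn : ∀ i, ConnectedMod ↥(Xs i)
      (GenIdeal {R : Set ↥(Xs i) | IsRealcompact ↥(closure R)}))
    (hnrc : ¬ IsRealcompact ↥(⋂ i, Xs i)) :
    ConnectedMod X (GenIdeal {R : Set X | IsRealcompact ↥(closure R)}) := by
  rintro ⟨f, hfc, hfm, h0, h1, hT⟩
  classical
  set T : Set X := (f ⁻¹' {0} ∪ f ⁻¹' {1})ᶜ with hTdef
  have key : ∀ i, ((f ∘ (Subtype.val : ↥(Xs i) → X)) ⁻¹' {0}
      ∈ GenIdeal {R : Set ↥(Xs i) | IsRealcompact ↥(closure R)}) ∨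
      ((f ∘ (Subtype.val : ↥(Xs i) → X)) ⁻¹' {1}
      ∈ GenIdeal {R : Set ↥(Xs i) | IsRealcompact ↥(closure R)}) := by
    intro i
    by_contra hcon
    push_neg at hcon
    refine hconn i ⟨f ∘ Subtype.val, hfc.comp continuous_subtype_val, fun x => hfm _,
      hcon.1, hcon.2, ?_⟩
    have heq : ((f ∘ (Subtype.val : ↥(Xs i) → X)) ⁻¹' {0} ∪ (f ∘ Subtype.val) ⁻¹' {1})ᶜ
        = (Subtype.val ⁻¹' T : Set ↥(Xs i)) := rfl
    rw [heq]
    exact genIdeal_preimage (hcl i) hT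
  by_cases hall0 : ∀ i, (f ∘ (Subtype.val : ↥(Xs i) → X)) ⁻¹' {0}
      ∈ GenIdeal {R : Set ↥(Xs i) | IsRealcompact ↥(closure R)}
  · apply h0
    have heq : f ⁻¹' {0} =
        ⋃ i, (Subtype.val '' ((f ∘ (Subtype.val : ↥(Xs i) → X)) ⁻¹' {0})) := by
      ext x
      constructor
      · intro hx
        have hxmem : x ∈ ⋃ i, Xs i := hcover ▸ Set.mem_univ x
        obtain ⟨i, hi⟩ := Set.mem_iUnion.1 hxmem
        exact Set.mem_iUnion.2 ⟨i, ⟨⟨x, hi⟩, hx, rfl⟩⟩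
      · intro hx
        obtain ⟨i, ⟨a, ha, rfl⟩⟩ := Set.mem_iUnion.1 hx
        exact ha
    rw [heq]
    exact genIdeal_iUnion fun i => genIdeal_image (hcl i) (hall0 i)
  by_cases hall1 : ∀ i, (f ∘ (Subtype.val : ↥(Xs i) → X)) ⁻¹' {1}
      ∈ GenIdeal {R : Set ↥(Xs i) | IsRealcompact ↥(closure R)}
  · apply h1
    have heq : f ⁻¹' {1} =
        ⋃ i, (Subtype.val '' ((f ∘ (Subtype.val : ↥(Xs i) → X)) ⁻¹' {1})) := by
      ext x
      constructor
      · intro hx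
        have hxmem : x ∈ ⋃ i, Xs i := hcover ▸ Set.mem_univ x
        obtain ⟨i, hi⟩ := Set.mem_iUnion.1 hxmem
        exact Set.mem_iUnion.2 ⟨i, ⟨⟨x, hi⟩, hx, rfl⟩⟩
      · intro hx
        obtain ⟨i, ⟨a, ha, rfl⟩⟩ := Set.mem_iUnion.1 hx
        exact ha
    rw [heq]
    exact genIdeal_iUnion fun i => genIdeal_image (hcl i) (hall1 i)
  push_neg at hall0 hall1
  obtain ⟨i₀, hi₀⟩ := hall0
  obtain ⟨j₀, hj₀⟩ := hall1
  have hmem1 := (key i₀).resolve_left hi₀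
  have hmem0 := (key j₀).resolve_right hj₀
  set K : Set X := ⋂ i, Xs i with hKdef
  have hKcl : IsClosed K := isClosed_iInter fun i => hcl i
  have hKmem : K ∈ GenIdeal {R : Set X | IsRealcompact ↥(closure R)} := by
    refine genIdeal_of_subset
      (S' := (Subtype.val '' ((f ∘ (Subtype.val : ↥(Xs j₀) → X)) ⁻¹' {0})) ∪
        ((Subtype.val '' ((f ∘ (Subtype.val : ↥(Xs i₀) → X)) ⁻¹' {1})) ∪ T)) ?_ ?_
    · intro x hx
      by_cases hx0 : f x = 0
      · exact Or.inl ⟨⟨x, Set.mem_iInter.1 hx j₀⟩, hx0, rfl⟩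
      by_cases hx1 : f x = 1
      · exact Or.inr (Or.inl ⟨⟨x, Set.mem_iInter.1 hx i₀⟩, hx1, rfl⟩)
      · refine Or.inr (Or.inr ?_)
        simp only [hTdef, Set.mem_compl_iff, Set.mem_union, Set.mem_preimage,
          Set.mem_singleton_iff]
        tauto
    · exact genIdeal_union (genIdeal_image (hcl j₀) hmem0)
        (genIdeal_union (genIdeal_image (hcl i₀) hmem1) hT)
  obtain ⟨𝓑, h𝓑A, h𝓑fin, hKsub⟩ := hKmem
  set 𝓒 : Set (Set X) := (fun R => closure R) '' 𝓑 with h𝓒def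
  have h𝓒 : ∀ S ∈ 𝓒, IsClosed S ∧ IsRealcompact ↥S := by
    rintro _ ⟨R, hR, rfl⟩
    exact ⟨isClosed_closure, h𝓑A hR⟩
  have hUrc : IsRealcompact ↥(⋃₀ 𝓒) := sUnion_rc (h𝓑fin.image _) h𝓒
  have hUcl : IsClosed (⋃₀ 𝓒) := by
    rw [Set.sUnion_eq_biUnion]
    exact (h𝓑fin.image _).isClosed_biUnion fun S hS => (h𝓒 S hS).1
  apply hnrc
  refine rc_transfer (e₁ := (Subtype.val : ↥K → X)) (e₂ := (Subtype.val : ↥(⋃₀ 𝓒) → X))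
    hKcl.isClosedEmbedding_subtypeVal hUcl.isClosedEmbedding_subtypeVal ?_ hUrc
  rw [Subtype.range_coe, Subtype.range_coe]
  refine hKsub.trans (Set.sUnion_subset fun R hR => ?_)
  exact subset_closure.trans (Set.subset_sUnion_of_mem ⟨R, hR, rfl⟩)
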